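/- For every f : {-1,1}^n → ℝ of degree at most d and every α ∈ (0,1], ‖T_α f‖_1 ≥ α^{d²} ‖f‖_1, where T_α is the noise operator and ‖·‖_1 the L1 norm over the uniform measure. -/

import Mathlib

open Finset

/-- The Fourier character χ_S evaluated at a point of the Boolean cube
(coordinates encoded by `Bool`, with `true ↦ 1` and `false ↦ -1`). -/
noncomputable def char {n : ℕ} (S : Finset (Fin n)) (x : Fin n → Bool) : ℝ :=
  ∏ i ∈ S, (if x i then (1 : ℝ) else -1)

/-- The multilinear polynomial with Fourier coefficients `c`, evaluated on the cube. -/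
noncomputable def eval' {n : ℕ} (c : Finset (Fin n) → ℝ) (x : Fin n → Bool) : ℝ :=
  ∑ S : Finset (Fin n), c S * char S x

/-- Flip the i-th coordinate. -/
def flipAt {n : ℕ} (x : Fin n → Bool) (i : Fin n) : Fin n → Bool :=
  Function.update x i (!(x i))

/-- Expectation over the uniform measure on the cube. -/
noncomputable def Ex {n : ℕ} (g : (Fin n → Bool) → ℝ) : ℝ :=
  (∑ x : Fin n → Bool, g x) / 2 ^ n

section AuxChebyshev
open Polynomial Real

noncomputable def Td : ℕ → Polynomial ℝ
  | 0 => 1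
  | 1 => Polynomial.X
  | (k+2) => 2 * Polynomial.X * Td (k+1) - Td k

lemma Td_degree : ∀ k, (Td k).degree ≤ k
  | 0 => by simpa [Td] using Polynomial.degree_one_le
  | 1 => by simp [Td, Polynomial.degree_X_le]
  | (k+2) => by
    have h1 := Td_degree (k+1)
    have h0 := Td_degree k
    rw [Td]
    refine le_trans (Polynomial.degree_sub_le _ _) (max_le ?_ ?_)
    · have h2X : (2 * Polynomial.X : Polynomial ℝ).degree ≤ 1 := by
        compute_degree
      calc (2 * Polynomial.X * Td (k+1) : Polynomial ℝ).degree
          ≤ (2 * Polynomial.X : Polynomial ℝ).degree + (Td (k+1)).degree :=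
            Polynomial.degree_mul_le _ _
        _ ≤ 1 + ((k+1 : ℕ) : WithBot ℕ) := add_le_add h2X h1
        _ = ((k+2 : ℕ) : WithBot ℕ) := by
            push_cast
            ring
    · exact h0.trans (by exact_mod_cast Nat.cast_le.mpr (Nat.le_add_right k 2))

lemma Td_cos : ∀ (k : ℕ) (θ : ℝ), (Td k).eval (Real.cos θ) = Real.cos (k * θ)
  | 0, θ => by simp [Td]
  | 1, θ => by simp [Td]
  | (k+2), θ => by
    have h1 := Td_cos (k+1) θ
    have h0 := Td_cos k θ
    have key : Real.cos (((k:ℝ)+1)*θ + θ) + Real.cos (((k:ℝ)+1)*θ - θ) =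
        2 * Real.cos (((k:ℝ)+1)*θ) * Real.cos θ := by
      rw [Real.cos_add, Real.cos_sub]; ring
    rw [Td]
    simp only [Polynomial.eval_sub, Polynomial.eval_mul, Polynomial.eval_ofNat,
      Polynomial.eval_X, h1, h0]
    push_cast
    have : ((k:ℝ)+2)*θ = ((k:ℝ)+1)*θ + θ := by ring
    rw [this]
    have hk : (k:ℝ)*θ = ((k:ℝ)+1)*θ - θ := by ring
    rw [hk] at *
    linarith [key]

lemma Td_cosh : ∀ (k : ℕ) (t : ℝ), (Td k).eval (Real.cosh t) = Real.cosh (k * t)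
  | 0, t => by simp [Td]
  | 1, t => by simp [Td]
  | (k+2), t => by
    have h1 := Td_cosh (k+1) t
    have h0 := Td_cosh k t
    have key : Real.cosh (((k:ℝ)+1)*t + t) + Real.cosh (((k:ℝ)+1)*t - t) =
        2 * Real.cosh (((k:ℝ)+1)*t) * Real.cosh t := by
      rw [Real.cosh_add, Real.cosh_sub]; ring
    rw [Td]
    simp only [Polynomial.eval_sub, Polynomial.eval_mul, Polynomial.eval_ofNat,
      Polynomial.eval_X, h1, h0]
    push_cast
    have : ((k:ℝ)+2)*t = ((k:ℝ)+1)*t + t := by ring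
    rw [this]
    have hk : (k:ℝ)*t = ((k:ℝ)+1)*t - t := by ring
    rw [hk] at *
    linarith [key]

lemma cosh_nat_mul_le (t : ℝ) (ht : 0 ≤ t) :
    ∀ d : ℕ, Real.cosh (d * t) ≤ Real.cosh t ^ (d * d) ∧
      Real.sinh (d * t) ≤ d * Real.cosh t ^ (d * d) * Real.sinh t := by
  intro d
  induction d with
  | zero => simp
  | succ d ih =>
    obtain ⟨hc, hs⟩ := ih
    have c1 : (1:ℝ) ≤ Real.cosh t := Real.one_le_cosh t
    have c0 : (0:ℝ) ≤ Real.cosh t := by linarith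
    have s0 : (0:ℝ) ≤ Real.sinh t := by rwa [Real.sinh_nonneg_iff]
    have sd0 : (0:ℝ) ≤ Real.sinh (d * t) := by
      rw [Real.sinh_nonneg_iff]; positivity
    have hpow1 : (0:ℝ) ≤ Real.cosh t ^ (d*d) := by positivity
    have hexp : ((d+1) * (d+1) : ℕ) = d*d + (2*d+1) := by ring
    have hsq : Real.sinh t ^ 2 = Real.cosh t ^ 2 - 1 := by
      have := Real.cosh_sq_sub_sinh_sq t; linarith
    have bern : 1 + (d:ℝ) * (Real.cosh t ^ 2 - 1) ≤ (Real.cosh t ^ 2) ^ d := by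
      have h2 : (-2:ℝ) ≤ Real.cosh t ^ 2 - 1 := by nlinarith
      simpa using one_add_mul_le_pow h2 d
    have key : Real.cosh t + (d:ℝ) * (Real.cosh t ^ 2 - 1) ≤ Real.cosh t ^ (2*d+1) := by
      have hrw : Real.cosh t ^ (2*d+1) = Real.cosh t * (Real.cosh t ^ 2) ^ d := by
        rw [pow_succ, pow_mul]; ring
      rw [hrw]
      have hm := mul_le_mul_of_nonneg_left bern c0
      have hx : (0:ℝ) ≤ (d:ℝ) * (Real.cosh t ^ 2 - 1) := by
        have : (0:ℝ) ≤ Real.cosh t ^ 2 - 1 := by nlinarith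
        positivity
      nlinarith [hm, hx, c1]
    constructor
    · have heq : ((d:ℝ)+1) * t = d * t + t := by ring
      push_cast
      rw [heq, Real.cosh_add]
      calc Real.cosh (d*t) * Real.cosh t + Real.sinh (d*t) * Real.sinh t
          ≤ Real.cosh t ^ (d*d) * Real.cosh t
            + (d * Real.cosh t ^ (d*d) * Real.sinh t) * Real.sinh t := by
            gcongr
        _ = Real.cosh t ^ (d*d) * (Real.cosh t + d * (Real.sinh t ^2)) := by ring
        _ ≤ Real.cosh t ^ (d*d) * Real.cosh t ^ (2*d+1) := by
            rw [hsq]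
            exact mul_le_mul_of_nonneg_left key hpow1
        _ = Real.cosh t ^ ((d+1)*(d+1)) := by rw [← pow_add]; congr 1; ring
    · have heq : ((d:ℝ)+1) * t = d * t + t := by ring
      push_cast
      rw [heq, Real.sinh_add]
      have hexple : d*d+1 ≤ (d+1)*(d+1) := by nlinarith
      have hmono : Real.cosh t ^ (d*d+1) ≤ Real.cosh t ^ ((d+1)*(d+1)) :=
        pow_le_pow_right₀ c1 hexple
      have hA : (d:ℝ) * Real.cosh t + 1 ≤ ((d:ℝ)+1) * Real.cosh t := by nlinarith
      calc Real.sinh (d*t) * Real.cosh t + Real.cosh (d*t) * Real.sinh t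
          ≤ (d * Real.cosh t ^ (d*d) * Real.sinh t) * Real.cosh t
            + Real.cosh t ^ (d*d) * Real.sinh t := by gcongr
        _ = ((d:ℝ) * Real.cosh t + 1) * (Real.cosh t ^ (d*d) * Real.sinh t) := by ring
        _ ≤ (((d:ℝ)+1) * Real.cosh t) * (Real.cosh t ^ (d*d) * Real.sinh t) := by
            exact mul_le_mul_of_nonneg_right hA (by positivity)
        _ = ((d:ℝ)+1) * (Real.cosh t ^ (d*d+1) * Real.sinh t) := by
            rw [pow_succ]; ring
        _ ≤ ((d:ℝ)+1) * (Real.cosh t ^ ((d+1)*(d+1)) * Real.sinh t) := by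
            have := mul_le_mul_of_nonneg_right hmono s0
            exact mul_le_mul_of_nonneg_left this (by positivity)
        _ = ((d:ℝ)+1) * Real.cosh t ^ ((d+1)*(d+1)) * Real.sinh t := by ring

end AuxChebyshev

section AuxNoise
open Finset

noncomputable def wgt {n : ℕ} (ρ : ℝ) (z : Fin n → Bool) : ℝ :=
  ∏ i, (if z i then (1+ρ)/2 else (1-ρ)/2)

lemma char_mul {n : ℕ} (S : Finset (Fin n)) (x z : Fin n → Bool) :
    char S (fun i => x i == z i) = char S x * char S z := by
  unfold char
  rw [← Finset.prod_mul_distrib]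
  apply Finset.prod_congr rfl
  intro i _
  cases hx : x i <;> cases hz : z i <;> simp [hx, hz]

lemma char_eq_prod_univ {n : ℕ} (S : Finset (Fin n)) (z : Fin n → Bool) :
    char S z = ∏ i, (if i ∈ S then (if z i then (1:ℝ) else -1) else 1) := by
  rw [Finset.prod_ite_mem, Finset.univ_inter]
  rfl

lemma sum_wgt_char {n : ℕ} (ρ : ℝ) (S : Finset (Fin n)) :
    ∑ z : Fin n → Bool, wgt ρ z * char S z = ρ ^ S.card := by
  have h1 : ∀ z : Fin n → Bool, wgt ρ z * char S z =
      ∏ i, ((if z i then (1+ρ)/2 else (1-ρ)/2) *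
        (if i ∈ S then (if z i then (1:ℝ) else -1) else 1)) := by
    intro z
    rw [Finset.prod_mul_distrib, char_eq_prod_univ]
    rfl
  have h3 := Fintype.prod_sum (f := fun (i : Fin n) (b : Bool) =>
    (if b then (1+ρ)/2 else (1-ρ)/2) * (if i ∈ S then (if b then (1:ℝ) else -1) else 1))
  rw [Finset.sum_congr rfl (fun z _ => h1 z), ← h3]
  have h2 : ∀ i : Fin n,
      (∑ b : Bool, (if b then (1+ρ)/2 else (1-ρ)/2) *
        (if i ∈ S then (if b then (1:ℝ) else -1) else 1)) =
      (if i ∈ S then ρ else 1) := by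
    intro i
    rw [Fintype.sum_bool]
    by_cases h : i ∈ S <;> simp [h] <;> ring
  rw [Finset.prod_congr rfl (fun i _ => h2 i), Finset.prod_ite_mem, Finset.univ_inter,
    Finset.prod_const]

lemma sum_wgt {n : ℕ} (ρ : ℝ) : ∑ z : Fin n → Bool, wgt ρ z = 1 := by
  have := sum_wgt_char (n := n) ρ ∅
  simpa [char] using this

lemma wgt_nonneg {n : ℕ} {ρ : ℝ} (hρ : |ρ| ≤ 1) (z : Fin n → Bool) : 0 ≤ wgt ρ z := by
  rw [abs_le] at hρ
  apply Finset.prod_nonneg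
  intro i _
  by_cases h : z i <;> simp [h] <;> linarith [hρ.1, hρ.2]

lemma noise_rep {n : ℕ} (ρ : ℝ) (g : Finset (Fin n) → ℝ) (x : Fin n → Bool) :
    eval' (fun S => ρ ^ S.card * g S) x
      = ∑ z : Fin n → Bool, wgt ρ z * eval' g (fun i => x i == z i) := by
  unfold eval'
  simp_rw [char_mul, Finset.mul_sum]
  rw [Finset.sum_comm]
  apply Finset.sum_congr rfl
  intro S _
  have : ∀ z : Fin n → Bool, wgt ρ z * (g S * (char S x * char S z))
      = (g S * char S x) * (wgt ρ z * char S z) := fun z => by ring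
  simp_rw [this, ← Finset.mul_sum, sum_wgt_char]
  ring

lemma contract_sum {n : ℕ} (g : Finset (Fin n) → ℝ) (ρ : ℝ) (hρ : |ρ| ≤ 1) :
    ∑ x : Fin n → Bool, |eval' (fun S => ρ ^ S.card * g S) x|
      ≤ ∑ x : Fin n → Bool, |eval' g x| := by
    calc ∑ x : Fin n → Bool, |eval' (fun S => ρ ^ S.card * g S) x|
        = ∑ x : Fin n → Bool, |∑ z : Fin n → Bool, wgt ρ z * eval' g (fun i => x i == z i)| := by
          simp_rw [noise_rep]
      _ ≤ ∑ x : Fin n → Bool, ∑ z : Fin n → Bool,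
            wgt ρ z * |eval' g (fun i => x i == z i)| := by
          apply Finset.sum_le_sum; intro x _
          refine (Finset.abs_sum_le_sum_abs _ _).trans ?_
          apply Finset.sum_le_sum; intro z _
          rw [abs_mul, abs_of_nonneg (wgt_nonneg hρ z)]
      _ = ∑ z : Fin n → Bool, wgt ρ z *
            ∑ x : Fin n → Bool, |eval' g (fun i => x i == z i)| := by
          rw [Finset.sum_comm]; simp_rw [Finset.mul_sum]
      _ = ∑ z : Fin n → Bool, wgt ρ z * ∑ y : Fin n → Bool, |eval' g y| := by
          apply Finset.sum_congr rfl; intro z _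
          congr 1
          have hinv : Function.Involutive (fun (x : Fin n → Bool) => fun i => x i == z i) := by
            intro x; funext i; cases hx : x i <;> cases hz : z i <;> simp [hx, hz]
          exact Fintype.sum_bijective _ hinv.bijective _ _ (fun x => rfl)
      _ = ∑ y : Fin n → Bool, |eval' g y| := by
          rw [← Finset.sum_mul, sum_wgt, one_mul]


end AuxNoise

section AuxInterp
open Finset Polynomial Real
section Nodes
variable {d : ℕ}

-- node facts
lemma node_mem (hd : 0 < d) (j : Fin (d+1)) :
    ((j:ℕ) * π / d) ∈ Set.Icc (0:ℝ) π := by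
  constructor
  · positivity
  · rw [div_le_iff₀ (by exact_mod_cast hd)]
    have hj : ((j:ℕ):ℝ) ≤ (d:ℝ) := by exact_mod_cast Nat.lt_succ_iff.mp j.isLt
    nlinarith [Real.pi_pos]

lemma node_inj (hd : 0 < d) :
    Set.InjOn (fun j : Fin (d+1) => Real.cos ((j:ℕ) * π / d)) ↑(univ : Finset (Fin (d+1))) := by
  intro j _ k _ h
  have := Real.injOn_cos (node_mem hd j) (node_mem hd k) h
  have hπ := Real.pi_pos
  have hd' : (0:ℝ) < d := by exact_mod_cast hd
  have : ((j:ℕ):ℝ) = ((k:ℕ):ℝ) := by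
    rw [div_left_inj' hd'.ne'] at this
    exact mul_right_cancel₀ hπ.ne' this
  exact Fin.ext (by exact_mod_cast this)

lemma node_anti (hd : 0 < d) {j k : Fin (d+1)} (h : j < k) :
    Real.cos ((k:ℕ) * π / d) < Real.cos ((j:ℕ) * π / d) := by
  apply Real.strictAntiOn_cos (node_mem hd j) (node_mem hd k)
  have hπ := Real.pi_pos
  have hd' : (0:ℝ) < d := by exact_mod_cast hd
  have hjk : ((j:ℕ):ℝ) < ((k:ℕ):ℝ) := by exact_mod_cast h
  rw [div_lt_div_iff_of_pos_right hd']
  nlinarith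

end Nodes

section Interp
variable {d : ℕ} {β : ℝ}

/-- Lagrange coefficients at Chebyshev nodes. -/
noncomputable def lam (d : ℕ) (β : ℝ) (j : Fin (d+1)) : ℝ :=
  (Lagrange.basis univ (fun j : Fin (d+1) => Real.cos ((j:ℕ) * π / d)) j).eval β

lemma interp_eval (hd : 0 < d) (β : ℝ) (p : Polynomial ℝ) (hp : p.degree < (d+1 : ℕ)) :
    p.eval β = ∑ j : Fin (d+1), p.eval (Real.cos ((j:ℕ) * π / d)) * lam d β j := by
  have hcard : (#(univ : Finset (Fin (d+1))) : WithBot ℕ) = ((d+1 : ℕ) : WithBot ℕ) := by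
    simp
  have h := Lagrange.eq_interpolate (v := fun j : Fin (d+1) => Real.cos ((j:ℕ) * π / d))
    (s := univ) (node_inj hd) (by rw [hcard]; exact hp)
  conv_lhs => rw [h]
  rw [Lagrange.interpolate_apply, Polynomial.eval_finset_sum]
  apply Finset.sum_congr rfl
  intro j _
  rw [Polynomial.eval_mul, Polynomial.eval_C]
  rfl

lemma lam_eval (β : ℝ) (j : Fin (d+1)) :
    lam d β j = ∏ k ∈ univ.erase j,
      ((Real.cos ((j:ℕ) * π / d) - Real.cos ((k:ℕ) * π / d))⁻¹
        * (β - Real.cos ((k:ℕ) * π / d))) := by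
  unfold lam Lagrange.basis
  rw [Polynomial.eval_prod]
  apply Finset.prod_congr rfl
  intro k _
  simp [Lagrange.basisDivisor]

lemma lam_abs (hd : 0 < d) (hβ : 1 < β) (j : Fin (d+1)) : |lam d β j| = (-1)^(j:ℕ) * lam d β j := by
  classical
  set v : Fin (d+1) → ℝ := fun j => Real.cos ((j:ℕ) * π / d) with hv
  have hfac : ∀ k ∈ univ.erase j, ((v j - v k)⁻¹ * (β - v k))
      = (if k < j then (-1:ℝ) else 1) * |(v j - v k)⁻¹ * (β - v k)| := by
    intro k hk
    have hkj : k ≠ j := (mem_erase.mp hk).1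
    have hβk : 0 < β - v k := by
      have := Real.cos_le_one ((k:ℕ) * π / d)
      simp only [hv]; nlinarith [hβ]
    rcases lt_or_gt_of_ne hkj with hlt | hgt
    · have hneg : v j - v k < 0 := by
        have := node_anti hd hlt
        simp only [hv]; linarith
      have : (v j - v k)⁻¹ * (β - v k) < 0 :=
        mul_neg_of_neg_of_pos (inv_lt_zero.mpr hneg) hβk
      rw [if_pos hlt, abs_of_neg this]; ring
    · have hpos : 0 < v j - v k := by
        have := node_anti hd hgt
        simp only [hv]; linarith
      have : 0 < (v j - v k)⁻¹ * (β - v k) :=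
        mul_pos (inv_pos.mpr hpos) hβk
      rw [if_neg (not_lt.mpr hgt.le), abs_of_pos this]; ring
  rw [lam_eval β j, Finset.prod_congr rfl hfac, Finset.prod_mul_distrib]
  have hsign : ∏ k ∈ univ.erase j, (if k < j then (-1:ℝ) else 1) = (-1)^(j:ℕ) := by
    rw [← Finset.prod_filter_mul_prod_filter_not (univ.erase j) (· < j)]
    rw [Finset.prod_eq_one (fun k hk => if_neg (mem_filter.mp hk).2), mul_one]
    rw [Finset.prod_congr rfl (fun k hk => if_pos (mem_filter.mp hk).2), Finset.prod_const]
    congr 1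
    have : (univ.erase j).filter (· < j) = Finset.Iio j := by
      ext k
      simp only [Finset.mem_filter, Finset.mem_erase, Finset.mem_univ, Finset.mem_Iio, true_and]
      exact ⟨fun h => h.2, fun h => ⟨⟨ne_of_lt h, trivial⟩, h⟩⟩
    rw [this, Fin.card_Iio]
  rw [hsign]
  have habs0 : 0 ≤ ∏ k ∈ univ.erase j, |(v j - v k)⁻¹ * (β - v k)| :=
    Finset.prod_nonneg (fun k _ => abs_nonneg _)
  rw [abs_mul, abs_prod]
  have h1 : |(-1:ℝ)^(j:ℕ)| = 1 := by
    rw [abs_pow, abs_neg, abs_one, one_pow]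
  have h2 : ∀ k ∈ univ.erase j, |(|(v j - v k)⁻¹ * (β - v k)|)| = |(v j - v k)⁻¹ * (β - v k)| :=
    fun k _ => abs_abs _
  rw [h1, one_mul, Finset.prod_congr rfl h2]
  have h3 : (-1:ℝ)^(j:ℕ) * ((-1:ℝ)^(j:ℕ) * ∏ k ∈ univ.erase j, |(v j - v k)⁻¹ * (β - v k)|)
      = ∏ k ∈ univ.erase j, |(v j - v k)⁻¹ * (β - v k)| := by
    rw [← mul_assoc, ← pow_add, Even.neg_one_pow ⟨(j:ℕ), rfl⟩, one_mul]
  rw [h3]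

end Interp

end AuxInterp
section AuxFinal
open Finset Polynomial Real

lemma Td_node {d : ℕ} (hd : 0 < d) (j : Fin (d+1)) :
    (Td d).eval (Real.cos ((j:ℕ) * π / d)) = (-1)^(j:ℕ) := by
  rw [Td_cos]
  have hd' : (d:ℝ) ≠ 0 := by exact_mod_cast hd.ne'
  have harg : (d:ℝ) * ((j:ℕ) * π / d) = (j:ℕ) * π := by field_simp
  rw [harg]
  have := Real.cos_nat_mul_pi_sub 0 (j:ℕ)
  simpa using this

lemma Td_le {d : ℕ} {β : ℝ} (hβ : 1 ≤ β) : (Td d).eval β ≤ β ^ (d*d) := by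
  set s := Real.sqrt (β^2 - 1) with hs
  have hs2 : s^2 = β^2 - 1 := Real.sq_sqrt (by nlinarith)
  have hs0 : 0 ≤ s := Real.sqrt_nonneg _
  set y := β + s with hy
  have hy1 : 1 ≤ y := by simp only [hy]; linarith
  have hy0 : 0 < y := by linarith
  set t := Real.log y with htdef
  have ht0 : 0 ≤ t := Real.log_nonneg hy1
  have hexp : Real.exp t = y := Real.exp_log hy0
  have hmul : y * (β - s) = 1 := by simp only [hy]; nlinarith [hs2]
  have hinv : y⁻¹ = β - s := inv_eq_of_mul_eq_one_right hmul
  have hcosh : Real.cosh t = β := by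
    rw [Real.cosh_eq, Real.exp_neg, hexp, hinv]
    simp only [hy]; ring
  calc (Td d).eval β = (Td d).eval (Real.cosh t) := by rw [hcosh]
    _ = Real.cosh (d * t) := Td_cosh d t
    _ ≤ Real.cosh t ^ (d*d) := (cosh_nat_mul_le t ht0 d).1
    _ = β ^ (d*d) := by rw [hcosh]

lemma sum_lam_le {d : ℕ} {β : ℝ} (hd : 0 < d) (hβ : 1 < β) :
    ∑ j : Fin (d+1), |lam d β j| ≤ β ^ (d*d) := by
  have h1 : ∑ j : Fin (d+1), |lam d β j|
      = ∑ j : Fin (d+1), (Td d).eval (Real.cos ((j:ℕ) * π / d)) * lam d β j := by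
    apply Finset.sum_congr rfl
    intro j _
    rw [lam_abs hd hβ j, Td_node hd j]
  have hdeg : (Td d).degree < ((d+1 : ℕ) : WithBot ℕ) :=
    lt_of_le_of_lt (Td_degree d) (by exact_mod_cast Nat.lt_succ_self d)
  rw [h1, ← interp_eval hd β (Td d) hdeg]
  exact Td_le hβ.le

end AuxFinal

open Polynomial Real

theorem noise_L1_lower_bound_degree (n d : ℕ) (c : Finset (Fin n) → ℝ) (α : ℝ)
    (h0 : 0 < α) (h1 : α ≤ 1)
    (hdeg : ∀ S, c S ≠ 0 → S.card ≤ d) :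
    α ^ (d ^ 2) * Ex (fun x => |eval' c x|)
      ≤ Ex (fun x => |eval' (fun S => α ^ S.card * c S) x|) := by
  by_cases hα1 : α = 1
  · subst hα1
    simp only [one_pow, one_mul]
    exact le_refl _
  by_cases hd0 : d = 0
  · subst hd0
    have heq : (fun S : Finset (Fin n) => α ^ S.card * c S) = c := by
      funext S
      by_cases h : c S = 0
      · simp [h]
      · have : S.card = 0 := Nat.le_zero.mp (hdeg S h)
        rw [this, pow_zero, one_mul]
    rw [heq]
    norm_num
  -- main case
  have hd : 0 < d := Nat.pos_of_ne_zero hd0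
  have hα : α < 1 := lt_of_le_of_ne h1 hα1
  have hβ : 1 < α⁻¹ := by
    have h2 : α * α⁻¹ = 1 := mul_inv_cancel₀ h0.ne'
    nlinarith [inv_pos.mpr h0]
  set β := α⁻¹ with hβdef
  set g := fun S : Finset (Fin n) => α ^ S.card * c S with hg
  set v := fun j : Fin (d+1) => Real.cos ((j:ℕ) * π / d) with hv
  have hmono : ∀ k : ℕ, k ≤ d → β ^ k = ∑ j : Fin (d+1), (v j)^k * lam d β j := by
    intro k hk
    have hdg : (Polynomial.X ^ k : Polynomial ℝ).degree < ((d+1 : ℕ) : WithBot ℕ) := by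
      rw [Polynomial.degree_X_pow]
      exact_mod_cast Nat.lt_succ_of_le hk
    have := interp_eval hd β (Polynomial.X ^ k) hdg
    simpa using this
  have hpt : ∀ x, eval' c x
      = ∑ j : Fin (d+1), lam d β j * eval' (fun S => (v j)^S.card * g S) x := by
    intro x
    unfold eval'
    have hterm : ∀ S : Finset (Fin n), c S * char S x
        = ∑ j : Fin (d+1), lam d β j * ((v j)^S.card * g S * char S x) := by
      intro S
      by_cases hc : c S = 0
      · simp [hc, hg]
      · have hcard := hdeg S hc
        have hcS : c S = β ^ S.card * g S := by
          simp only [hg, hβdef]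
          rw [← mul_assoc, ← mul_pow, inv_mul_cancel₀ h0.ne', one_pow, one_mul]
        rw [hcS, hmono S.card hcard, Finset.sum_mul, Finset.sum_mul]
        apply Finset.sum_congr rfl; intro j _; ring
    rw [Finset.sum_congr rfl (fun S _ => hterm S), Finset.sum_comm]
    apply Finset.sum_congr rfl; intro j _
    rw [← Finset.mul_sum]
  have hB0 : 0 ≤ ∑ x : Fin n → Bool, |eval' g x| :=
    Finset.sum_nonneg (fun x _ => abs_nonneg _)
  have hA : ∑ x : Fin n → Bool, |eval' c x|
      ≤ β ^ (d*d) * ∑ x : Fin n → Bool, |eval' g x| := by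
    calc ∑ x : Fin n → Bool, |eval' c x|
        = ∑ x : Fin n → Bool,
            |∑ j : Fin (d+1), lam d β j * eval' (fun S => (v j)^S.card * g S) x| := by
          apply Finset.sum_congr rfl; intro x _; rw [hpt x]
      _ ≤ ∑ x : Fin n → Bool, ∑ j : Fin (d+1),
            |lam d β j| * |eval' (fun S => (v j)^S.card * g S) x| := by
          apply Finset.sum_le_sum; intro x _
          refine (Finset.abs_sum_le_sum_abs _ _).trans ?_
          apply Finset.sum_le_sum; intro j _
          rw [abs_mul]
      _ = ∑ j : Fin (d+1), |lam d β j| *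
            ∑ x : Fin n → Bool, |eval' (fun S => (v j)^S.card * g S) x| := by
          rw [Finset.sum_comm]; simp_rw [Finset.mul_sum]
      _ ≤ ∑ j : Fin (d+1), |lam d β j| * ∑ x : Fin n → Bool, |eval' g x| := by
          apply Finset.sum_le_sum; intro j _
          apply mul_le_mul_of_nonneg_left ?_ (abs_nonneg _)
          exact contract_sum g (v j) (Real.abs_cos_le_one _)
      _ = (∑ j : Fin (d+1), |lam d β j|) * ∑ x : Fin n → Bool, |eval' g x| := by
          rw [Finset.sum_mul]
      _ ≤ β ^ (d*d) * ∑ x : Fin n → Bool, |eval' g x| :=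
          mul_le_mul_of_nonneg_right (sum_lam_le hd hβ) hB0
  have hfinal : α ^ (d^2) * ∑ x : Fin n → Bool, |eval' c x|
      ≤ ∑ x : Fin n → Bool, |eval' g x| := by
    have hd2 : d ^ 2 = d * d := pow_two d
    have hab : α ^ (d*d) * β ^ (d*d) = 1 := by
      rw [← mul_pow, hβdef, mul_inv_cancel₀ h0.ne', one_pow]
    calc α ^ (d^2) * ∑ x : Fin n → Bool, |eval' c x|
        ≤ α ^ (d^2) * (β ^ (d*d) * ∑ x : Fin n → Bool, |eval' g x|) := by
          apply mul_le_mul_of_nonneg_left hA (by positivity)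
      _ = (α ^ (d*d) * β ^ (d*d)) * ∑ x : Fin n → Bool, |eval' g x| := by
          rw [hd2]; ring
      _ = ∑ x : Fin n → Bool, |eval' g x| := by rw [hab, one_mul]
  unfold Ex
  rw [mul_div_assoc']
  exact div_le_div_of_nonneg_right hfinal (by positivity)
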